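/- Suppose each of n agents has a matroid rank valuation v_i on subsets of a finite set O of items. Then every Pareto optimal allocation is utilitarian optimal. -/

import Mathlib

/-- An allocation: bundles are pairwise disjoint. -/
def IsAlloc {O : Type*} [DecidableEq O] {n : ℕ} (A : Fin n → Finset O) : Prop :=
  ∀ i j, i ≠ j → Disjoint (A i) (A j)

/-- Utilitarian social welfare. -/
def USW {O : Type*} {n : ℕ} (v : Fin n → Finset O → ℤ)
    (A : Fin n → Finset O) : ℤ :=
  ∑ i, v i (A i)

/-- `B` Pareto dominates `A`. -/
def ParetoDom {O : Type*} {n : ℕ} (v : Fin n → Finset O → ℤ)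
    (B A : Fin n → Finset O) : Prop :=
  (∀ i, v i (A i) ≤ v i (B i)) ∧ ∃ j, v j (A j) < v j (B j)

section Aux

variable {O : Type*} [DecidableEq O] (v : Finset O → ℤ)

lemma aux_le_insert
    (hbin : ∀ (S : Finset O) (o : O), o ∉ S →
      v (insert o S) - v S = 0 ∨ v (insert o S) - v S = 1)
    (S : Finset O) (o : O) : v S ≤ v (insert o S) := by
  by_cases h : o ∈ S
  · rw [Finset.insert_eq_self.2 h]
  · rcases hbin S o h with h1 | h1 <;> omega

lemma aux_mono
    (hbin : ∀ (S : Finset O) (o : O), o ∉ S →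
      v (insert o S) - v S = 0 ∨ v (insert o S) - v S = 1)
    {S T : Finset O} (hST : S ⊆ T) : v S ≤ v T := by
  classical
  have key : ∀ T : Finset O, v S ≤ v (S ∪ T) := by
    intro T
    induction T using Finset.induction_on with
    | empty => simp
    | @insert a T _ ih =>
        rw [Finset.union_insert]
        exact ih.trans (aux_le_insert v hbin _ a)
  have h := key T
  rwa [Finset.union_eq_right.2 hST] at h

lemma aux_nonneg (h0 : v ∅ = 0)
    (hbin : ∀ (S : Finset O) (o : O), o ∉ S →
      v (insert o S) - v S = 0 ∨ v (insert o S) - v S = 1)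
    (S : Finset O) : 0 ≤ v S := by
  have := aux_mono v hbin (Finset.empty_subset S)
  omega

lemma aux_card (h0 : v ∅ = 0)
    (hbin : ∀ (S : Finset O) (o : O), o ∉ S →
      v (insert o S) - v S = 0 ∨ v (insert o S) - v S = 1)
    (S : Finset O) : v S ≤ S.card := by
  induction S using Finset.induction_on with
  | empty => simp [h0]
  | @insert a S ha ih =>
      rcases hbin S a ha with h1 | h1 <;>
      · rw [Finset.card_insert_of_notMem ha]
        push_cast
        omega

lemma aux_sub_bound
    (hbin : ∀ (S : Finset O) (o : O), o ∉ S →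
      v (insert o S) - v S = 0 ∨ v (insert o S) - v S = 1)
    (hsub : ∀ (S T : Finset O), S ⊆ T → ∀ o ∉ T,
      v (insert o T) - v T ≤ v (insert o S) - v S)
    (X : Finset O) (T : Finset O) :
    v (X ∪ T) ≤ v X + ∑ o ∈ T \ X, (v (insert o X) - v X) := by
  classical
  induction T using Finset.induction_on with
  | empty => simp
  | @insert a T ha ih =>
      by_cases haX : a ∈ X
      · have h1 : X ∪ insert a T = X ∪ T := by
          rw [Finset.union_insert, Finset.insert_eq_self.2 (Finset.mem_union_left T haX)]
        have h2 : insert a T \ X = T \ X := Finset.insert_sdiff_of_mem T haX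
        rw [h1, h2]; exact ih
      · by_cases haT : a ∈ X ∪ T
        · have haT' : a ∈ T := by
            rcases Finset.mem_union.1 haT with h | h
            · exact absurd h haX
            · exact h
          exact absurd haT' ha
        · have h1 : X ∪ insert a T = insert a (X ∪ T) := by
            rw [Finset.union_insert]
          have h2 : insert a T \ X = insert a (T \ X) :=
            Finset.insert_sdiff_of_notMem T haX
          have h3 : a ∉ T \ X := fun h => ha (Finset.mem_sdiff.1 h).1
          have h4 := hsub X (X ∪ T) Finset.subset_union_left a haT
          rw [h1, h2, Finset.sum_insert h3]
          linarith

lemma aux_exchange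
    (hbin : ∀ (S : Finset O) (o : O), o ∉ S →
      v (insert o S) - v S = 0 ∨ v (insert o S) - v S = 1)
    (hsub : ∀ (S T : Finset O), S ⊆ T → ∀ o ∉ T,
      v (insert o T) - v T ≤ v (insert o S) - v S)
    {X Y : Finset O} (h : v X < v Y) :
    ∃ o ∈ Y \ X, v (insert o X) = v X + 1 := by
  classical
  by_contra hc
  push_neg at hc
  have hz : ∀ o ∈ Y \ X, v (insert o X) - v X = 0 := by
    intro o ho
    rcases hbin X o (Finset.mem_sdiff.1 ho).2 with h1 | h1
    · exact h1
    · exact absurd (by omega) (hc o ho)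
  have h1 := aux_sub_bound v hbin hsub X Y
  rw [Finset.sum_congr rfl hz, Finset.sum_const, smul_zero] at h1
  have h2 : v Y ≤ v (X ∪ Y) := aux_mono v hbin Finset.subset_union_right
  omega

end Aux

lemma sum_delta_two {n : ℕ} (f g : Fin n → ℤ) {k m : Fin n} (hkm : k ≠ m)
    (h : ∀ i, i ≠ k → i ≠ m → f i = g i) :
    ∑ i, f i = (∑ i, g i) + (f k - g k) + (f m - g m) := by
  classical
  have h1 : ∑ i, (f i - g i) = ∑ i ∈ ({k, m} : Finset (Fin n)), (f i - g i) := by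
    refine (Finset.sum_subset (Finset.subset_univ _) ?_).symm
    intro x _ hx
    simp only [Finset.mem_insert, Finset.mem_singleton, not_or] at hx
    rw [h x hx.1 hx.2]; ring
  rw [Finset.sum_pair hkm] at h1
  rw [Finset.sum_sub_distrib] at h1
  linarith

lemma sum_delta_one {n : ℕ} (f g : Fin n → ℤ) (k : Fin n)
    (h : ∀ i, i ≠ k → f i = g i) :
    ∑ i, f i = (∑ i, g i) + (f k - g k) := by
  classical
  have h1 : ∑ i, (f i - g i) = ∑ i ∈ ({k} : Finset (Fin n)), (f i - g i) := by
    refine (Finset.sum_subset (Finset.subset_univ _) ?_).symm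
    intro x _ hx
    simp only [Finset.mem_singleton] at hx
    rw [h x hx]; ring
  rw [Finset.sum_singleton] at h1
  rw [Finset.sum_sub_distrib] at h1
  linarith

lemma lex_lt_one (M u u' p p' q q' : ℤ) (hM : 0 ≤ M) (hu : u < u')
    (hp : 0 ≤ p) (hp' : p' ≤ M) (hq : q ≤ M) (hq' : 0 ≤ q') :
    (M+1)^2 * u - (M+1) * p + q < (M+1)^2 * u' - (M+1) * p' + q' := by
  have h1 : (M+1)^2 * (u+1) ≤ (M+1)^2 * u' :=
    mul_le_mul_of_nonneg_left (by omega) (by positivity)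
  have h1' : (M+1)^2 * u + (M+1)^2 ≤ (M+1)^2 * u' := by linarith [h1, (by ring :
    (M+1)^2 * (u+1) = (M+1)^2 * u + (M+1)^2)]
  have h2 : (M+1) * p' ≤ (M+1) * M := mul_le_mul_of_nonneg_left hp' (by omega)
  have h3 : 0 ≤ (M+1) * p := mul_nonneg (by omega) hp
  have h4 : (M+1)^2 - (M+1) * M = M + 1 := by ring
  linarith

lemma lex_lt_two (M u p p' q q' : ℤ) (hM : 0 ≤ M) (hp : p' ≤ p) (hq : q < q') :
    (M+1)^2 * u - (M+1) * p + q < (M+1)^2 * u - (M+1) * p' + q' := by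
  have h2 : (M+1) * p' ≤ (M+1) * p := mul_le_mul_of_nonneg_left hp (by omega)
  linarith

lemma max0_succ (x : ℤ) : max 0 (x + 1) ≤ max 0 x + 1 := by
  rcases le_total (x + 1) 0 with h | h
  · rw [max_eq_left h]
    have := le_max_left 0 x
    linarith
  · rw [max_eq_right h]
    have := le_max_right 0 x
    linarith

/-- For matroid rank valuations, any Pareto optimal allocation
is utilitarian optimal. -/
theorem paretoOpt_implies_utilOpt
    {O : Type*} [DecidableEq O] [Fintype O] {n : ℕ}
    (v : Fin n → Finset O → ℤ)
    (h0 : ∀ i, v i ∅ = 0)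
    (hbin : ∀ i (S : Finset O) (o : O), o ∉ S →
      v i (insert o S) - v i S = 0 ∨ v i (insert o S) - v i S = 1)
    (hsub : ∀ i (S T : Finset O), S ⊆ T → ∀ o ∉ T,
      v i (insert o T) - v i T ≤ v i (insert o S) - v i S)
    (A : Fin n → Finset O)
    (hA : IsAlloc A)
    (hPO : ¬ ∃ B : Fin n → Finset O, IsAlloc B ∧ ParetoDom v B A) :
    ∀ B : Fin n → Finset O, IsAlloc B → USW v B ≤ USW v A := by
  classical
  have nonneg : ∀ i S, 0 ≤ v i S := fun i S => aux_nonneg (v i) (h0 i) (hbin i) S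
  have cardb : ∀ i S, v i S ≤ S.card := fun i S => aux_card (v i) (h0 i) (hbin i) S
  set M : ℤ := (n : ℤ) * (Fintype.card O : ℤ) with hMdef
  have hM0 : 0 ≤ M := mul_nonneg (Int.natCast_nonneg n) (Int.natCast_nonneg _)
  have cardO : ∀ S : Finset O, (S.card : ℤ) ≤ (Fintype.card O : ℤ) := by
    intro S; exact_mod_cast Finset.card_le_univ S
  -- the potential components
  set Phi : (Fin n → Finset O) → ℤ :=
    fun C => ∑ i, max 0 (v i (A i) - v i (C i)) with hPhidef
  set Int' : (Fin n → Finset O) → ℤ :=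
    fun C => ∑ i, ((A i ∩ C i).card : ℤ) with hIntdef
  set Psi : (Fin n → Finset O) → ℤ :=
    fun C => (M+1)^2 * USW v C - (M+1) * Phi C + Int' C with hPsidef
  -- bounds
  have sum_const_bound : ∀ f : Fin n → ℤ, (∀ i, f i ≤ (Fintype.card O : ℤ)) →
      (∑ i, f i) ≤ M := by
    intro f hf
    calc ∑ i, f i ≤ ∑ _i : Fin n, (Fintype.card O : ℤ) :=
          Finset.sum_le_sum (fun i _ => hf i)
      _ = M := by
          rw [Finset.sum_const, Finset.card_univ, Fintype.card_fin, nsmul_eq_mul, hMdef]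
  have hUSW0 : ∀ C : Fin n → Finset O, 0 ≤ USW v C := by
    intro C
    exact Finset.sum_nonneg (fun i _ => nonneg i (C i))
  have hUSWM : ∀ C : Fin n → Finset O, USW v C ≤ M := by
    intro C
    exact sum_const_bound _ (fun i => (cardb i (C i)).trans (cardO (C i)))
  have hPhi0 : ∀ C, 0 ≤ Phi C :=
    fun C => Finset.sum_nonneg (fun i _ => le_max_left 0 _)
  have hPhiM : ∀ C, Phi C ≤ M := by
    intro C
    apply sum_const_bound
    intro i
    have h1 : v i (A i) - v i (C i) ≤ (Fintype.card O : ℤ) := by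
      have := nonneg i (C i)
      have := (cardb i (A i)).trans (cardO (A i))
      omega
    exact max_le (Int.natCast_nonneg _) h1
  have hInt0 : ∀ C, 0 ≤ Int' C :=
    fun C => Finset.sum_nonneg (fun i _ => Int.natCast_nonneg _)
  have hIntM : ∀ C, Int' C ≤ M := by
    intro C
    exact sum_const_bound _ (fun i => cardO _)
  -- lexicographic consequences
  have lexA : ∀ C C' : Fin n → Finset O, USW v C < USW v C' → Psi C < Psi C' := by
    intro C C' h
    exact lex_lt_one M _ _ _ _ _ _ hM0 h (hPhi0 C) (hPhiM C') (hIntM C) (hInt0 C')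
  -- choose a Psi-maximal allocation
  obtain ⟨B, hBalloc, hBmax⟩ :
      ∃ B : Fin n → Finset O, IsAlloc B ∧ ∀ C, IsAlloc C → Psi C ≤ Psi B := by
    have hne : (Finset.univ.filter fun C : Fin n → Finset O => IsAlloc C).Nonempty :=
      ⟨A, Finset.mem_filter.2 ⟨Finset.mem_univ _, hA⟩⟩
    obtain ⟨B, hB1, hB2⟩ := Finset.exists_max_image _ Psi hne
    exact ⟨B, (Finset.mem_filter.1 hB1).2,
      fun C hC => hB2 C (Finset.mem_filter.2 ⟨Finset.mem_univ _, hC⟩)⟩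
  -- main claim: USW v B ≤ USW v A
  have hBA : USW v B ≤ USW v A := by
    by_contra hgt
    push_neg at hgt
    by_cases hdom : ∀ i, v i (A i) ≤ v i (B i)
    · apply hPO
      refine ⟨B, hBalloc, hdom, ?_⟩
      by_contra hno
      push_neg at hno
      have : USW v B ≤ USW v A := Finset.sum_le_sum (fun i _ => hno i)
      omega
    · push_neg at hdom
      obtain ⟨k, hk⟩ := hdom
      obtain ⟨o, ho, hov⟩ := aux_exchange (v k) (hbin k) (hsub k) hk
      rw [Finset.mem_sdiff] at ho
      obtain ⟨hoA, hoB⟩ := ho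
      by_cases hfree : ∃ m, o ∈ B m
      · obtain ⟨m, hom⟩ := hfree
        have hmk : m ≠ k := fun h => hoB (h ▸ hom)
        set B' : Fin n → Finset O :=
          fun i => if i = k then insert o (B k) else if i = m then (B m).erase o else B i
          with hB'def
        have hB'k : B' k = insert o (B k) := by simp [hB'def]
        have hB'm : B' m = (B m).erase o := by simp [hB'def, hmk]
        have hB'other : ∀ i, i ≠ k → i ≠ m → B' i = B i := by
          intro i h1 h2; simp [hB'def, h1, h2]
        have hB'alloc : IsAlloc B' := by
          intro i j hij
          rw [Finset.disjoint_left]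
          intro x hxi hxj
          have key : ∀ l, x ∈ B' l → (x ∈ B l ∧ ¬(l = m ∧ x = o)) ∨ (l = k ∧ x = o) := by
            intro l hx
            by_cases hlk : l = k
            · subst hlk
              rw [hB'k, Finset.mem_insert] at hx
              rcases hx with h | h
              · exact Or.inr ⟨rfl, h⟩
              · refine Or.inl ⟨h, ?_⟩
                rintro ⟨h1, rfl⟩
                exact hoB h
            · by_cases hlm : l = m
              · subst hlm
                rw [hB'm, Finset.mem_erase] at hx
                refine Or.inl ⟨hx.2, ?_⟩
                rintro ⟨-, rfl⟩
                exact hx.1 rfl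
              · rw [hB'other l hlk hlm] at hx
                exact Or.inl ⟨hx, fun h => hlm h.1⟩
          rcases key i hxi with ⟨hxBi, hni⟩ | ⟨hik, hxo⟩
          · rcases key j hxj with ⟨hxBj, hnj⟩ | ⟨hjk, hxo⟩
            · exact Finset.disjoint_left.1 (hBalloc i j hij) hxBi hxBj
            · subst hxo
              by_cases him : i = m
              · exact hni ⟨him, rfl⟩
              · exact Finset.disjoint_left.1 (hBalloc i m him) hxBi hom
          · subst hxo
            rcases key j hxj with ⟨hxBj, hnj⟩ | ⟨hjk, -⟩
            · by_cases hjm : j = m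
              · exact hnj ⟨hjm, rfl⟩
              · exact Finset.disjoint_left.1 (hBalloc j m hjm) hxBj hom
            · exact hij (hik.trans hjk.symm)
        -- values at k and m
        have hvk : v k (B' k) = v k (B k) + 1 := by rw [hB'k, hov]
        have hins : insert o ((B m).erase o) = B m := Finset.insert_erase hom
        have hbm := hbin m ((B m).erase o) o (Finset.notMem_erase o (B m))
        rw [hins] at hbm
        rcases hbm with hm0 | hm1
        · -- m loses nothing : USW increases
          have hUSW' : USW v B' = USW v B + 1 := by
            have hs := sum_delta_two (fun i => v i (B' i)) (fun i => v i (B i))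
              (Ne.symm hmk) (fun i h1 h2 => by rw [hB'other i h1 h2])
            have hvm : v m (B' m) = v m (B m) := by rw [hB'm]; omega
            simp only [USW]
            omega
          have := lexA B B' (by omega)
          have := hBmax B' hB'alloc
          omega
        · -- m loses one : USW equal, Phi ≤, Int' increases
          have hvm : v m (B' m) = v m (B m) - 1 := by rw [hB'm]; omega
          have hUSW' : USW v B' = USW v B := by
            have hs := sum_delta_two (fun i => v i (B' i)) (fun i => v i (B i))
              (Ne.symm hmk) (fun i h1 h2 => by rw [hB'other i h1 h2])
            simp only [USW]
            omega
          have hPhi' : Phi B' ≤ Phi B := by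
            have hs := sum_delta_two (fun i => max 0 (v i (A i) - v i (B' i)))
              (fun i => max 0 (v i (A i) - v i (B i)))
              (Ne.symm hmk) (fun i h1 h2 => by rw [hB'other i h1 h2])
            have e1 : max 0 (v k (A k) - v k (B' k)) = v k (A k) - v k (B k) - 1 := by
              rw [hvk, max_eq_right (by omega)]
              ring
            have e2 : max 0 (v k (A k) - v k (B k)) = v k (A k) - v k (B k) :=
              max_eq_right (by omega)
            have e3 : max 0 (v m (A m) - v m (B' m)) ≤ max 0 (v m (A m) - v m (B m)) + 1 := by
              have := max0_succ (v m (A m) - v m (B m))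
              rw [hvm]
              have heq : v m (A m) - (v m (B m) - 1) = (v m (A m) - v m (B m)) + 1 := by ring
              rw [heq]
              exact this
            simp only [hPhidef]
            omega
          have hInt' : Int' B + 1 ≤ Int' B' := by
            have hs := sum_delta_two (fun i => ((A i ∩ B' i).card : ℤ))
              (fun i => ((A i ∩ B i).card : ℤ))
              (Ne.symm hmk) (fun i h1 h2 => by rw [hB'other i h1 h2])
            have e1 : A k ∩ B' k = insert o (A k ∩ B k) := by
              rw [hB'k]
              exact Finset.inter_insert_of_mem hoA
            have e1' : ((A k ∩ B' k).card : ℤ) = ((A k ∩ B k).card : ℤ) + 1 := by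
              rw [e1, Finset.card_insert_of_notMem (fun h => hoB (Finset.mem_inter.1 h).2)]
              push_cast
              ring
            have hoAm : o ∉ A m := Finset.disjoint_left.1 (hA k m (Ne.symm hmk)) hoA
            have e2 : A m ∩ B' m = A m ∩ B m := by
              rw [hB'm]
              ext x
              simp only [Finset.mem_inter, Finset.mem_erase]
              constructor
              · rintro ⟨h1, -, h2⟩; exact ⟨h1, h2⟩
              · rintro ⟨h1, h2⟩
                exact ⟨h1, fun hxo => hoAm (hxo ▸ h1), h2⟩
            simp only [hIntdef]
            rw [e2] at hs
            omega
          have hlt : Psi B < Psi B' := by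
            have := lex_lt_two M (USW v B) (Phi B) (Phi B') (Int' B) (Int' B')
              hM0 hPhi' (by omega)
            simp only [hPsidef]
            rw [hUSW']
            exact this
          have := hBmax B' hB'alloc
          omega
      · -- o is unallocated in B
        push_neg at hfree
        set B' : Fin n → Finset O :=
          fun i => if i = k then insert o (B k) else B i with hB'def
        have hB'k : B' k = insert o (B k) := by simp [hB'def]
        have hB'other : ∀ i, i ≠ k → B' i = B i := by
          intro i h1; simp [hB'def, h1]
        have hB'alloc : IsAlloc B' := by
          intro i j hij
          rw [Finset.disjoint_left]
          intro x hxi hxj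
          have key : ∀ l, x ∈ B' l → x ∈ B l ∨ (l = k ∧ x = o) := by
            intro l hx
            by_cases hlk : l = k
            · subst hlk
              rw [hB'k, Finset.mem_insert] at hx
              rcases hx with h | h
              · exact Or.inr ⟨rfl, h⟩
              · exact Or.inl h
            · rw [hB'other l hlk] at hx
              exact Or.inl hx
          rcases key i hxi with h1 | ⟨hik, hxo⟩
          · rcases key j hxj with h2 | ⟨hjk, hxo⟩
            · exact Finset.disjoint_left.1 (hBalloc i j hij) h1 h2
            · subst hxo; exact hfree i h1
          · subst hxo
            rcases key j hxj with h2 | ⟨hjk, -⟩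
            · exact hfree j h2
            · exact hij (hik.trans hjk.symm)
        have hvk : v k (B' k) = v k (B k) + 1 := by rw [hB'k, hov]
        have hUSW' : USW v B' = USW v B + 1 := by
          have hs := sum_delta_one (fun i => v i (B' i)) (fun i => v i (B i))
            k (fun i h1 => by rw [hB'other i h1])
          simp only [USW]
          omega
        have := lexA B B' (by omega)
        have := hBmax B' hB'alloc
        omega
  intro C hC
  by_contra h
  push_neg at h
  have h2 : USW v B < USW v C := lt_of_le_of_lt hBA h
  have := lexA B C h2
  have := hBmax C hC
  omega
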